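/- For every s ∈ [0,1) the equation x = s·φ(x) has a unique solution h(s) in [0,1] (so the minimal nonnegative solution is the only one). Moreover h(s)/s → q as s → 0+, and h(s) → 1 as s → 1−. -/

import Mathlib

open MeasureTheory ProbabilityTheory Filter Topology

/-- `φ(s) = q + ∑_{n≥0} p_n s^{n+1}`. -/
noncomputable def phi (q : ℝ) (p : ℕ → ℝ) (s : ℝ) : ℝ :=
  q + ∑' n : ℕ, p n * s ^ (n + 1)

/-- `φ'(s) = ∑_{n≥0} (n+1) p_n s^n`. -/
noncomputable def phiDeriv (p : ℕ → ℝ) (s : ℝ) : ℝ :=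
  ∑' n : ℕ, (n + 1 : ℝ) * p n * s ^ n

/-- `h s` is the minimal nonnegative solution `x ∈ [0,1]` of `x = s * φ x`, for every
`s ∈ [0,1]`. -/
def IsMinimalSolution (φ : ℝ → ℝ) (h : ℝ → ℝ) : Prop :=
  ∀ s ∈ Set.Icc (0 : ℝ) 1, h s ∈ Set.Icc (0 : ℝ) 1 ∧ h s = s * φ (h s) ∧
    ∀ y ∈ Set.Icc (0 : ℝ) 1, y = s * φ y → h s ≤ y

lemma summable_phi_term (p : ℕ → ℝ) (hp : ∀ n, 0 ≤ p n) (hpsum : Summable p)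
    {x : ℝ} (hx0 : 0 ≤ x) (hx1 : x ≤ 1) :
    Summable (fun n : ℕ => p n * x ^ (n + 1)) := by
  refine Summable.of_nonneg_of_le (fun n => mul_nonneg (hp n) (pow_nonneg hx0 _))
    (fun n => ?_) hpsum
  calc p n * x ^ (n + 1) ≤ p n * 1 := by
        exact mul_le_mul_of_nonneg_left (pow_le_one₀ hx0 hx1) (hp n)
    _ = p n := mul_one _

lemma phi_nonneg_tsum (p : ℕ → ℝ) (hp : ∀ n, 0 ≤ p n) {x : ℝ} (hx0 : 0 ≤ x) :
    0 ≤ ∑' n : ℕ, p n * x ^ (n + 1) :=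
  tsum_nonneg (fun n => mul_nonneg (hp n) (pow_nonneg hx0 _))

lemma phi_ge_q (q : ℝ) (p : ℕ → ℝ) (hp : ∀ n, 0 ≤ p n) {x : ℝ} (hx0 : 0 ≤ x) :
    q ≤ phi q p x := by
  have := phi_nonneg_tsum p hp hx0
  unfold phi; linarith

lemma phi_le_q_add (q : ℝ) (p : ℕ → ℝ) (hq : 0 ≤ q) (hp : ∀ n, 0 ≤ p n) (hpsum : Summable p)
    (htotal : q + ∑' n : ℕ, p n = 1)
    {x : ℝ} (hx0 : 0 ≤ x) (hx1 : x ≤ 1) :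
    phi q p x ≤ q + x := by
  have h1 : ∑' n : ℕ, p n * x ^ (n + 1) ≤ ∑' n : ℕ, p n * x := by
    refine Summable.tsum_le_tsum (fun n => ?_) (summable_phi_term p hp hpsum hx0 hx1)
      (hpsum.mul_right x)
    have : x ^ (n + 1) ≤ x ^ 1 := pow_le_pow_of_le_one hx0 hx1 (by omega)
    simpa using mul_le_mul_of_nonneg_left this (hp n)
  have h2 : ∑' n : ℕ, p n * x = (∑' n : ℕ, p n) * x := tsum_mul_right
  have h3 : (∑' n : ℕ, p n) * x ≤ 1 * x :=
    mul_le_mul_of_nonneg_right (by linarith) hx0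
  unfold phi
  nlinarith

lemma phi_le_one (q : ℝ) (p : ℕ → ℝ) (hp : ∀ n, 0 ≤ p n) (hpsum : Summable p)
    (htotal : q + ∑' n : ℕ, p n = 1)
    {x : ℝ} (hx0 : 0 ≤ x) (hx1 : x ≤ 1) :
    phi q p x ≤ 1 := by
  have h1 : ∑' n : ℕ, p n * x ^ (n + 1) ≤ ∑' n : ℕ, p n := by
    refine Summable.tsum_le_tsum (fun n => ?_) (summable_phi_term p hp hpsum hx0 hx1) hpsum
    calc p n * x ^ (n + 1) ≤ p n * 1 :=
          mul_le_mul_of_nonneg_left (pow_le_one₀ hx0 hx1) (hp n)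
      _ = p n := mul_one _
  unfold phi; linarith

lemma abs_pow_sub_pow_le' {x y : ℝ} (hx : |x| ≤ 1) (hy : |y| ≤ 1) (n : ℕ) :
    |x ^ n - y ^ n| ≤ n * |x - y| := by
  induction n with
  | zero => simp
  | succ n ih =>
    have hxy : x ^ (n + 1) - y ^ (n + 1) = x * (x ^ n - y ^ n) + (x - y) * y ^ n := by ring
    have h1 : |x * (x ^ n - y ^ n)| ≤ 1 * (n * |x - y|) := by
      rw [abs_mul]
      exact mul_le_mul hx ih (abs_nonneg _) zero_le_one
    have h2 : |(x - y) * y ^ n| ≤ |x - y| * 1 := by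
      rw [abs_mul]
      refine mul_le_mul_of_nonneg_left ?_ (abs_nonneg _)
      rw [abs_pow]
      exact pow_le_one₀ (abs_nonneg _) hy
    calc |x ^ (n + 1) - y ^ (n + 1)| ≤ |x * (x ^ n - y ^ n)| + |(x - y) * y ^ n| := by
          rw [hxy]; exact abs_add_le _ _
      _ ≤ 1 * (n * |x - y|) + |x - y| * 1 := add_le_add h1 h2
      _ = (↑(n + 1) : ℝ) * |x - y| := by push_cast; ring

lemma phi_lipschitz (q : ℝ) (p : ℕ → ℝ) (hp : ∀ n, 0 ≤ p n) (hpsum : Summable p)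
    (hmoment : Summable (fun n : ℕ => (n + 1 : ℝ) * p n))
    (hcrit : ∑' n : ℕ, (n + 1 : ℝ) * p n = 1)
    {x y : ℝ} (hx0 : 0 ≤ x) (hx1 : x ≤ 1) (hy0 : 0 ≤ y) (hy1 : y ≤ 1) :
    |phi q p x - phi q p y| ≤ |x - y| := by
  have hsx := summable_phi_term p hp hpsum hx0 hx1
  have hsy := summable_phi_term p hp hpsum hy0 hy1
  have heq : phi q p x - phi q p y = ∑' n : ℕ, (p n * x ^ (n + 1) - p n * y ^ (n + 1)) := by
    rw [Summable.tsum_sub hsx hsy]; unfold phi; ring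
  have hbound : ∀ n : ℕ, |p n * x ^ (n + 1) - p n * y ^ (n + 1)| ≤
      ((n : ℝ) + 1) * p n * |x - y| := by
    intro n
    rw [← mul_sub, abs_mul, abs_of_nonneg (hp n)]
    have := abs_pow_sub_pow_le' (x := x) (y := y)
      (by rw [abs_of_nonneg hx0]; exact hx1) (by rw [abs_of_nonneg hy0]; exact hy1) (n + 1)
    calc p n * |x ^ (n + 1) - y ^ (n + 1)| ≤ p n * ((↑(n + 1) : ℝ) * |x - y|) :=
          mul_le_mul_of_nonneg_left this (hp n)
      _ = ((n : ℝ) + 1) * p n * |x - y| := by push_cast; ring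
  have hsumabs : Summable (fun n : ℕ => |p n * x ^ (n + 1) - p n * y ^ (n + 1)|) := by
    refine Summable.of_nonneg_of_le (fun n => abs_nonneg _) hbound (hmoment.mul_right _)
  calc |phi q p x - phi q p y|
      = |∑' n : ℕ, (p n * x ^ (n + 1) - p n * y ^ (n + 1))| := by rw [heq]
    _ ≤ ∑' n : ℕ, |p n * x ^ (n + 1) - p n * y ^ (n + 1)| := by
        have hnorm : Summable (fun n : ℕ => ‖p n * x ^ (n + 1) - p n * y ^ (n + 1)‖) := by
          simpa [Real.norm_eq_abs] using hsumabs
        have h5 := norm_tsum_le_tsum_norm hnorm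
        simpa [Real.norm_eq_abs] using h5
    _ ≤ ∑' n : ℕ, ((n : ℝ) + 1) * p n * |x - y| :=
        Summable.tsum_le_tsum hbound hsumabs (hmoment.mul_right _)
    _ = (∑' n : ℕ, ((n : ℝ) + 1) * p n) * |x - y| := tsum_mul_right
    _ = |x - y| := by rw [hcrit, one_mul]

/-- Strengthened Bernoulli: `1 + (N+1)(x-1) + N(1-x)^2 ≤ x^(N+1)` on `[0,1]`. -/
lemma bernoulli_plus {x : ℝ} (hx0 : 0 ≤ x) (hx1 : x ≤ 1) (N : ℕ) :
    1 + ((N : ℝ) + 1) * (x - 1) + (N : ℝ) * (1 - x) ^ 2 ≤ x ^ (N + 1) := by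
  induction N with
  | zero => simp
  | succ N ih =>
    have hxpow : x * (1 + ((N : ℝ) + 1) * (x - 1) + (N : ℝ) * (1 - x) ^ 2) ≤ x ^ (N + 2) := by
      calc x * (1 + ((N : ℝ) + 1) * (x - 1) + (N : ℝ) * (1 - x) ^ 2)
          ≤ x * x ^ (N + 1) := mul_le_mul_of_nonneg_left ih hx0
        _ = x ^ (N + 2) := by ring
    have hN : (0 : ℝ) ≤ N := Nat.cast_nonneg N
    push_cast
    nlinarith [sq_nonneg (1 - x), mul_nonneg hN (sq_nonneg (1 - x))]

/-- Key quantitative bound: `φ(x) - x ≥ N * p N * (1 - x)^2` on `[0,1]`, for any `N`. -/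
lemma phi_sub_key (q : ℝ) (p : ℕ → ℝ) (hp : ∀ n, 0 ≤ p n)
    (hpsum : Summable p) (htotal : q + ∑' n : ℕ, p n = 1)
    (hmoment : Summable (fun n : ℕ => (n + 1 : ℝ) * p n))
    (hcrit : ∑' n : ℕ, (n + 1 : ℝ) * p n = 1)
    (N : ℕ) {x : ℝ} (hx0 : 0 ≤ x) (hx1 : x ≤ 1) :
    (N : ℝ) * p N * (1 - x) ^ 2 ≤ phi q p x - x := by
  have hsx := summable_phi_term p hp hpsum hx0 hx1
  -- g n := p n * (1 + (n+1)(x-1))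
  set g : ℕ → ℝ := fun n => p n - (1 - x) * ((n + 1 : ℝ) * p n) with hg
  have hsg : Summable g := hpsum.sub (hmoment.mul_left _)
  have hgsum : ∑' n, g n = (1 - q) - (1 - x) := by
    rw [hg]
    rw [Summable.tsum_sub hpsum (hmoment.mul_left _), tsum_mul_left, hcrit]
    have : ∑' n : ℕ, p n = 1 - q := by linarith
    rw [this]; ring
  -- termwise differences are nonnegative, and the N-th is large
  have hterm : ∀ n : ℕ, 0 ≤ p n * x ^ (n + 1) - g n := by
    intro n
    have hb : 1 + ((n : ℝ) + 1) * (x - 1) ≤ x ^ (n + 1) := by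
      have := one_add_mul_le_pow (a := x - 1) (by linarith) (n + 1)
      rw [show (1 : ℝ) + (x - 1) = x by ring] at this
      push_cast at this ⊢
      linarith
    have : g n = p n * (1 + ((n : ℝ) + 1) * (x - 1)) := by rw [hg]; ring
    rw [this]
    nlinarith [mul_le_mul_of_nonneg_left hb (hp n)]
  have hdiff_summable : Summable (fun n => p n * x ^ (n + 1) - g n) := hsx.sub hsg
  have hNterm : (N : ℝ) * p N * (1 - x) ^ 2 ≤ p N * x ^ (N + 1) - g N := by
    have hb := bernoulli_plus hx0 hx1 N
    have : g N = p N * (1 + ((N : ℝ) + 1) * (x - 1)) := by rw [hg]; ring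
    rw [this]
    nlinarith [mul_le_mul_of_nonneg_left hb (hp N), mul_nonneg (hp N)
      (mul_nonneg (Nat.cast_nonneg N : (0:ℝ) ≤ N) (sq_nonneg (1 - x)))]
  have hle : p N * x ^ (N + 1) - g N ≤ ∑' n, (p n * x ^ (n + 1) - g n) :=
    Summable.le_tsum hdiff_summable N (fun j _ => hterm j)
  have htsum_diff : ∑' n, (p n * x ^ (n + 1) - g n)
      = (∑' n, p n * x ^ (n + 1)) - ((1 - q) - (1 - x)) := by
    rw [Summable.tsum_sub hsx hsg, hgsum]
  rw [htsum_diff] at hle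
  unfold phi
  nlinarith [le_trans hNterm hle]

theorem h_unique_and_limits
    (q : ℝ) (p : ℕ → ℝ) (hq : 0 < q) (hp : ∀ n, 0 ≤ p n)
    (hpsum : Summable p) (htotal : q + ∑' n : ℕ, p n = 1) (hp0 : p 0 < 1)
    (hmoment : Summable (fun n : ℕ => (n + 1 : ℝ) * p n))
    (hcrit : ∑' n : ℕ, (n + 1 : ℝ) * p n = 1)
    (h : ℝ → ℝ) (hmin : IsMinimalSolution (phi q p) h)
:
    (∀ s ∈ Set.Ico (0 : ℝ) 1, ∃! y, y ∈ Set.Icc (0 : ℝ) 1 ∧ y = s * phi q p y) ∧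
    Tendsto (fun s => h s / s) (𝓝[>] (0 : ℝ)) (𝓝 q) ∧
    Tendsto h (𝓝[<] (1 : ℝ)) (𝓝 1) := by
  -- find N ≥ 1 with p N > 0
  obtain ⟨N, hN1, hpN⟩ : ∃ N : ℕ, 1 ≤ N ∧ 0 < p N := by
    by_contra hcon
    push_neg at hcon
    have hz : ∀ n : ℕ, n ≠ 0 → ((n : ℝ) + 1) * p n = 0 := by
      intro n hn
      have : p n ≤ 0 := hcon n (by omega)
      have : p n = 0 := le_antisymm this (hp n)
      rw [this, mul_zero]
    have := tsum_eq_single (L := SummationFilter.unconditional ℕ) (f := fun n : ℕ => ((n : ℝ) + 1) * p n) 0 hz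
    rw [hcrit] at this
    simp at this
    linarith
  set c : ℝ := (N : ℝ) * p N with hc
  have hcpos : 0 < c := mul_pos (by exact_mod_cast hN1) hpN
  constructor
  · -- uniqueness
    rintro s ⟨hs0, hs1⟩
    obtain ⟨hhmem, hheq, -⟩ := hmin s ⟨hs0, le_of_lt hs1⟩
    refine ⟨h s, ⟨hhmem, hheq⟩, ?_⟩
    rintro y ⟨⟨hy0, hy1⟩, hyeq⟩
    have hlip := phi_lipschitz q p hp hpsum hmoment hcrit hy0 hy1 hhmem.1 hhmem.2
    have habs : |y - h s| ≤ s * |y - h s| := by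
      calc |y - h s| = |s * phi q p y - s * phi q p (h s)| := by rw [← hyeq, ← hheq]
        _ = s * |phi q p y - phi q p (h s)| := by
            rw [← mul_sub, abs_mul, abs_of_nonneg hs0]
        _ ≤ s * |y - h s| := mul_le_mul_of_nonneg_left hlip hs0
    have : |y - h s| = 0 := by nlinarith [abs_nonneg (y - h s)]
    have : y - h s = 0 := abs_eq_zero.mp this
    linarith
  constructor
  · -- limit at 0+
    have hmem : Set.Ioo (0 : ℝ) 1 ∈ 𝓝[>] (0 : ℝ) := Ioo_mem_nhdsGT_of_mem (by norm_num)
    have hbounds : ∀ s ∈ Set.Ioo (0 : ℝ) 1,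
        q ≤ h s / s ∧ h s / s ≤ q + s := by
      rintro s ⟨hs0, hs1⟩
      obtain ⟨⟨hh0, hh1⟩, hheq, -⟩ := hmin s ⟨le_of_lt hs0, le_of_lt hs1⟩
      have hdiv : h s / s = phi q p (h s) := by
        rw [div_eq_iff (ne_of_gt hs0)]
        linarith [hheq]
      have hhle : h s ≤ s := by
        have := phi_le_one q p hp hpsum htotal hh0 hh1
        nlinarith [hheq]
      constructor
      · rw [hdiv]; exact phi_ge_q q p hp hh0
      · rw [hdiv]
        have := phi_le_q_add q p hq.le hp hpsum htotal hh0 hh1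
        linarith
    refine tendsto_of_tendsto_of_tendsto_of_le_of_le' (g := fun _ : ℝ => q)
      (h := fun s : ℝ => q + s) tendsto_const_nhds ?_ ?_ ?_
    · have : Tendsto (fun s : ℝ => q + s) (𝓝 (0 : ℝ)) (𝓝 (q + 0)) :=
        (continuous_const.add continuous_id).tendsto 0
      simpa using this.mono_left nhdsWithin_le_nhds
    · filter_upwards [hmem] with s hs using (hbounds s hs).1
    · filter_upwards [hmem] with s hs using (hbounds s hs).2
  · -- limit at 1−
    have hmem : Set.Ioo (0 : ℝ) 1 ∈ 𝓝[<] (1 : ℝ) := Ioo_mem_nhdsLT_of_mem (by norm_num)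
    have hbounds : ∀ s ∈ Set.Ioo (0 : ℝ) 1,
        1 - Real.sqrt ((1 - s) / c) ≤ h s ∧ h s ≤ 1 := by
      rintro s ⟨hs0, hs1⟩
      obtain ⟨⟨hh0, hh1⟩, hheq, -⟩ := hmin s ⟨le_of_lt hs0, le_of_lt hs1⟩
      refine ⟨?_, hh1⟩
      have hkey := phi_sub_key q p hp hpsum htotal hmoment hcrit N hh0 hh1
      have hphile := phi_le_one q p hp hpsum htotal hh0 hh1
      have hphige : 0 ≤ phi q p (h s) := le_trans (le_of_lt hq) (phi_ge_q q p hp hh0)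
      have hdiff : phi q p (h s) - h s ≤ 1 - s := by
        nlinarith [hheq, mul_nonneg (sub_nonneg.2 hs1.le) (sub_nonneg.2 hphile)]
      have hsq : (1 - h s) ^ 2 ≤ (1 - s) / c := by
        rw [le_div_iff₀ hcpos]
        nlinarith
      have : 1 - h s ≤ Real.sqrt ((1 - s) / c) := by
        rw [Real.le_sqrt (by linarith) (div_nonneg (by linarith) hcpos.le)]
        exact hsq
      linarith
    refine tendsto_of_tendsto_of_tendsto_of_le_of_le'
      (g := fun s : ℝ => 1 - Real.sqrt ((1 - s) / c)) (h := fun _ : ℝ => (1 : ℝ)) ?_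
      tendsto_const_nhds ?_ ?_
    · have hcont : Continuous (fun s : ℝ => 1 - Real.sqrt ((1 - s) / c)) := by
        continuity
      have : Tendsto (fun s : ℝ => 1 - Real.sqrt ((1 - s) / c)) (𝓝 (1 : ℝ))
          (𝓝 (1 - Real.sqrt ((1 - 1) / c))) := hcont.tendsto 1
      simpa using this.mono_left nhdsWithin_le_nhds
    · filter_upwards [hmem] with s hs using (hbounds s hs).1
    · filter_upwards [hmem] with s hs using (hbounds s hs).2
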